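/- Let D = {N ⊴ F_∞ : F_∞/N is infinite and every coset of N contains infinitely many generators x_i}. Then D is a dense Gδ subset of the space M of normal subgroups of F_∞, and hence comeager in M. -/

import Mathlib

/-- `G : ℕ × ℕ → ℕ` is a group operation on `ℕ`. -/
def IsGroupOp (G : ℕ × ℕ → ℕ) : Prop :=
  (∀ a b c, G (G (a, b), c) = G (a, G (b, c))) ∧
  ∃ e, (∀ a, G (e, a) = a ∧ G (a, e) = a) ∧ ∀ a, ∃ b, G (a, b) = e ∧ G (b, a) = e

/-- A copy of `ℕ` used as the carrier of the group `(ℕ, G)` associated to a group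
operation `G` (a type synonym, so that the group structure induced by `G` does not
clash with the usual arithmetic structure of `ℕ`). -/
def NatCarrier : Type := ℕ

/-- The identification of `ℕ` with `NatCarrier`. -/
def NatCarrier.mk : ℕ → NatCarrier := id

/-- The group `(ℕ, G)` induced by a group operation `G` on `ℕ`. -/
noncomputable def groupOfOp (G : ℕ × ℕ → ℕ) (h : IsGroupOp G) : Group NatCarrier where
  mul a b := NatCarrier.mk (G (a, b))
  one := NatCarrier.mk h.2.choose
  inv a := NatCarrier.mk (h.2.choose_spec.2 a).choose
  mul_assoc a b c := h.1 a b c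
  one_mul a := (h.2.choose_spec.1 a).1
  mul_one a := (h.2.choose_spec.1 a).2
  inv_mul_cancel a := (h.2.choose_spec.2 a).choose_spec.2

/-- The space of group operations on `ℕ` (topology inherited from `ℕ^(ℕ×ℕ)`). -/
abbrev GroupOpSpace : Type := {G : ℕ × ℕ → ℕ // IsGroupOp G}

/-- The kernel of the marking homomorphism `F_∞ → (ℕ, G)`, `x_i ↦ i`. -/
noncomputable def markingKer (G : ℕ × ℕ → ℕ) (h : IsGroupOp G) : Subgroup (FreeGroup ℕ) := by
  letI := groupOfOp G h
  exact (FreeGroup.lift fun i => NatCarrier.mk i).ker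

lemma markingKer_normal (G : ℕ × ℕ → ℕ) (h : IsGroupOp G) : (markingKer G h).Normal := by
  letI := groupOfOp G h
  exact MonoidHom.normal_ker _

def charSet {α : Type*} (χ : α → Bool) : Set α := {x | χ x = true}

/-- `χ` codes a normal subgroup. -/
def IsNormalSubgroupChar {α : Type*} [Group α] (χ : α → Bool) : Prop :=
  ∃ H : Subgroup α, H.Normal ∧ (H : Set α) = charSet χ

/-- The space of marked groups: normal subgroups of `F_∞` as a subspace of `2^{F_∞}`. -/
abbrev MarkedSpace : Type := {χ : FreeGroup ℕ → Bool // IsNormalSubgroupChar χ}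

/-- `F_∞ ⧸ H` is isomorphic to the group `(ℕ, G)`. -/
def QuotIsoOp (H : Subgroup (FreeGroup ℕ)) (hn : H.Normal)
    (G : ℕ × ℕ → ℕ) (hG : IsGroupOp G) : Prop := by
  haveI := hn
  letI := groupOfOp G hG
  exact Nonempty ((FreeGroup ℕ ⧸ H) ≃* NatCarrier)

/-- `D`: the set of normal subgroups `N ⊴ F_∞` such that `F_∞/N` is infinite and every
coset of `N` contains infinitely many generators `x_i`. -/
def Dset : Set MarkedSpace :=
  {N | (∃ f : ℕ → FreeGroup ℕ, ∀ i j, i ≠ j → N.1 (f i * (f j)⁻¹) = false) ∧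
    ∀ u : FreeGroup ℕ, {i : ℕ | N.1 (u⁻¹ * FreeGroup.of i) = true}.Infinite}

section aux

open Function Set

instance : Countable (FreeGroup ℕ) := FreeGroup.toWord_injective.countable

lemma elem_open (w : FreeGroup ℕ) (b : Bool) : IsOpen {N : MarkedSpace | N.1 w = b} := by
  have hc : Continuous fun N : MarkedSpace => N.1 w :=
    (continuous_apply w).comp continuous_subtype_val
  exact hc.isOpen_preimage {b} (isOpen_discrete _)

/-- Open approximations to the "infinite quotient" condition. -/
def Aset (n : ℕ) : Set MarkedSpace :=
  {N | ∃ f : Fin n → FreeGroup ℕ, ∀ i j, i ≠ j → N.1 (f i * (f j)⁻¹) = false}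

/-- Open approximations to the "every coset contains infinitely many generators" condition. -/
def Bset (p : FreeGroup ℕ × ℕ) : Set MarkedSpace :=
  {N | ∃ i, p.2 ≤ i ∧ N.1 (p.1⁻¹ * FreeGroup.of i) = true}

lemma Aset_open (n : ℕ) : IsOpen (Aset n) := by
  have : Aset n = ⋃ f : Fin n → FreeGroup ℕ, ⋂ i, ⋂ j,
      {N : MarkedSpace | i ≠ j → N.1 (f i * (f j)⁻¹) = false} := by
    ext N
    simp [Aset, Set.mem_iUnion, Set.mem_iInter]
  rw [this]
  refine isOpen_iUnion fun f => isOpen_iInter_of_finite fun i => isOpen_iInter_of_finite fun j => ?_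
  by_cases h : i = j
  · simp [h]
  · have : {N : MarkedSpace | i ≠ j → N.1 (f i * (f j)⁻¹) = false}
        = {N : MarkedSpace | N.1 (f i * (f j)⁻¹) = false} := by
      ext N; simp [h]
    rw [this]; exact elem_open _ _

lemma Bset_open (p : FreeGroup ℕ × ℕ) : IsOpen (Bset p) := by
  have : Bset p = ⋃ i, ⋃ (_ : p.2 ≤ i), {N : MarkedSpace | N.1 (p.1⁻¹ * FreeGroup.of i) = true} := by
    ext N; simp [Bset]
  rw [this]
  exact isOpen_iUnion fun i => isOpen_iUnion fun _ => elem_open _ _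

lemma Dset_eq : Dset = (⋂ n, Aset n) ∩ ⋂ p, Bset p := by
  ext N
  simp only [Dset, Aset, Bset, Set.mem_setOf_eq, Set.mem_inter_iff, Set.mem_iInter]
  constructor
  · rintro ⟨⟨f, hf⟩, hB⟩
    refine ⟨fun n => ⟨fun i => f i.1, fun i j hij => hf i.1 j.1 fun h => hij (Fin.val_injective h)⟩,
      fun p => ?_⟩
    obtain ⟨i, hi, hlt⟩ := (hB p.1).exists_gt p.2
    exact ⟨i, hlt.le, hi⟩
  · rintro ⟨hA, hB⟩
    obtain ⟨H, hHn, hHs⟩ := N.2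
    have hmem : ∀ w, w ∈ H ↔ N.1 w = true := fun w => by
      rw [← SetLike.mem_coe, hHs]; exact Iff.rfl
    have hfalse : ∀ w, N.1 w = false ↔ w ∉ H := fun w => by
      rw [hmem]; cases N.1 w <;> simp
    constructor
    · -- infinitely many cosets
      have hinf : Infinite (FreeGroup ℕ ⧸ H) := by
        by_contra hfin
        rw [not_infinite_iff_finite] at hfin
        obtain ⟨f, hf⟩ := hA (Nat.card (FreeGroup ℕ ⧸ H) + 1)
        have hinj : Function.Injective
            (fun i : Fin (Nat.card (FreeGroup ℕ ⧸ H) + 1) =>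
              (QuotientGroup.mk (f i) : FreeGroup ℕ ⧸ H)) := by
          intro i j hij
          by_contra hne
          have h1 : (f i)⁻¹ * f j ∈ H := QuotientGroup.eq.mp hij
          have h2 : f j * (f i)⁻¹ ∈ H := hHn.mem_comm h1
          exact absurd h2 ((hfalse _).mp (hf j i (Ne.symm hne)))
        have hc := Nat.card_le_card_of_injective _ hinj
        simp [Nat.card_eq_fintype_card] at hc
      haveI := hinf
      let e := Infinite.natEmbedding (FreeGroup ℕ ⧸ H)
      refine ⟨fun n => (e n).out, fun i j hij => ?_⟩
      rw [hfalse]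
      intro hmemH
      have h1 : ((e j).out)⁻¹ * (e i).out ∈ H := hHn.mem_comm hmemH
      have h2 : (QuotientGroup.mk ((e j).out) : FreeGroup ℕ ⧸ H) = QuotientGroup.mk ((e i).out) :=
        QuotientGroup.eq.mpr h1
      rw [QuotientGroup.out_eq', QuotientGroup.out_eq'] at h2
      exact hij (e.injective h2.symm)
    · -- every coset has infinitely many generators
      intro u
      by_contra hfin
      rw [Set.not_infinite] at hfin
      obtain ⟨b, hb⟩ := hfin.bddAbove
      obtain ⟨i, hbi, hi⟩ := hB (u, b + 1)
      exact absurd (hb hi) (by omega)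

end aux

section dense

open Function Set

lemma dense_Dset : Dense Dset := by
  classical
  rw [dense_iff_inter_open]
  rintro U hU ⟨x, hxU⟩
  obtain ⟨V, hV, rfl⟩ := isOpen_induced_iff.mp hU
  have hxV : (x : FreeGroup ℕ → Bool) ∈ V := hxU
  obtain ⟨S, u, hu, hSV⟩ := isOpen_pi_iff.mp hV _ hxV
  obtain ⟨H, hHn, hHs⟩ := x.2
  haveI := hHn
  have hmem : ∀ w, w ∈ H ↔ x.1 w = true := fun w => by
    rw [← SetLike.mem_coe, hHs]; exact Iff.rfl
  haveI : Countable (FreeGroup ℕ ⧸ H) := Quotient.countable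
  obtain ⟨s, hs⟩ := exists_surjective_nat ((FreeGroup ℕ ⧸ H) × Multiplicative ℤ)
  set T : Finset ℕ := S.sup fun w => (w.toWord.map Prod.fst).toFinset with hT
  set c : ℕ → (FreeGroup ℕ ⧸ H) × Multiplicative ℤ := fun i =>
    if i ∈ T then (QuotientGroup.mk (FreeGroup.of i), 1) else s (Nat.unpair i).1 with hc
  set φ := FreeGroup.lift c with hφ
  set χ : FreeGroup ℕ → Bool := fun w => if w ∈ φ.ker then true else false with hχdef
  have hχ : ∀ w, χ w = true ↔ φ w = 1 := fun w => by
    simp [hχdef, MonoidHom.mem_ker]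
  have hχf : ∀ w, χ w = false ↔ ¬ φ w = 1 := fun w => by
    simp [hχdef, MonoidHom.mem_ker]
  have hNmem : IsNormalSubgroupChar χ :=
    ⟨φ.ker, φ.normal_ker, by ext w; simp [charSet, hχdef]⟩
  set N : MarkedSpace := ⟨χ, hNmem⟩ with hN
  have hφof : ∀ i, φ (FreeGroup.of i) = c i := fun i => FreeGroup.lift_apply_of
  -- every value of c is attained infinitely often
  have key : ∀ γ, {i : ℕ | c i = γ}.Infinite := by
    intro γ
    obtain ⟨k, hk⟩ := hs γ
    have h1 : (Set.range fun m => Nat.pair k m).Infinite :=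
      Set.infinite_range_of_injective fun a b hab => (Nat.pair_eq_pair.mp hab).2
    refine (h1.diff T.finite_toSet).mono ?_
    rintro i ⟨⟨m, rfl⟩, hiT⟩
    simp only [Set.mem_setOf_eq, hc]
    rw [if_neg (by simpa using hiT), Nat.unpair_pair]
    exact hk
  -- condition B
  have hB : ∀ v : FreeGroup ℕ, {i : ℕ | N.1 (v⁻¹ * FreeGroup.of i) = true}.Infinite := by
    intro v
    refine (key (φ v)).mono ?_
    intro i hi
    simp only [Set.mem_setOf_eq] at hi ⊢
    rw [hχ, map_mul, map_inv, hφof, hi, inv_mul_cancel]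
  -- condition A
  have hA : ∃ f : ℕ → FreeGroup ℕ, ∀ i j, i ≠ j → N.1 (f i * (f j)⁻¹) = false := by
    set e := Infinite.natEmbedding ((FreeGroup ℕ ⧸ H) × Multiplicative ℤ) with he
    have pick : ∀ n : ℕ, ∃ i, c i = e n := fun n => (key (e n)).nonempty
    choose g hg using pick
    refine ⟨fun n => FreeGroup.of (g n), fun i j hij => ?_⟩
    rw [hχf, map_mul, map_inv, hφof, hφof, hg, hg]
    intro h
    exact hij (e.injective (by rwa [mul_inv_eq_one] at h))
  -- agreement on S
  have hagree : ∀ w ∈ S, χ w = x.1 w := by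
    intro w hw
    have hletters : ∀ a ∈ w.toWord, a.1 ∈ T := by
      intro a ha
      refine Finset.mem_sup.mpr ⟨w, hw, ?_⟩
      simp only [List.mem_toFinset]
      exact List.mem_map_of_mem (f := Prod.fst) ha
    have hφw : φ w = (QuotientGroup.mk w, (1 : Multiplicative ℤ)) := by
      have h1 : φ w = FreeGroup.lift (fun i =>
          ((QuotientGroup.mk (FreeGroup.of i) : FreeGroup ℕ ⧸ H), (1 : Multiplicative ℤ))) w := by
        conv_lhs => rw [hφ, ← FreeGroup.mk_toWord (x := w), FreeGroup.lift_mk]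
        conv_rhs => rw [← FreeGroup.mk_toWord (x := w), FreeGroup.lift_mk]
        congr 1
        refine List.map_congr_left fun a ha => ?_
        have hca : c a.1 = (QuotientGroup.mk (FreeGroup.of a.1), 1) := by
          rw [hc]; exact if_pos (hletters a ha)
        rw [hca]
      have h2 : ∀ i, ((QuotientGroup.mk' H).prod 1) (FreeGroup.of i) =
          ((QuotientGroup.mk (FreeGroup.of i) : FreeGroup ℕ ⧸ H), (1 : Multiplicative ℤ)) := by
        intro i; rfl
      rw [h1, ← FreeGroup.lift_unique ((QuotientGroup.mk' H).prod 1) h2]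
      rfl
    have hiff : χ w = true ↔ x.1 w = true := by
      rw [hχ, hφw, Prod.mk_eq_one, QuotientGroup.eq_one_iff, hmem]
      simp
    cases hxw : x.1 w <;> cases hcw : χ w <;> simp_all
  refine ⟨N, ?_, hA, hB⟩
  exact hSV fun w hw => by
    show χ w ∈ u w
    rw [hagree w (by simpa using hw)]
    exact (hu w (by simpa using hw)).2

end dense


/-- `D` is a dense `Gδ` subset of the space `M` of marked groups, hence comeager. -/
theorem stmt_16 : Dense Dset ∧ IsGδ Dset ∧ Dset ∈ residual MarkedSpace := by
  have hGδ : IsGδ Dset := by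
    rw [Dset_eq]
    exact ((IsGδ.iInter fun n => (Aset_open n).isGδ).inter
      (IsGδ.iInter fun p => (Bset_open p).isGδ))
  exact ⟨dense_Dset, hGδ, residual_of_dense_Gδ hGδ dense_Dset⟩
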